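/- Let f₀, …, fₙ be non-negative integrable functions on a probability space (X, B, μ) and let B₁, …, Bₙ ⊆ B be sub-σ-algebras. Then ∫ f₀ · ∏_{i=1}^n E[f_i | B_i] dμ ≥ (∫ ∏_{i=0}^n f_i^{1/(n+1)} dμ)^{n+1}. -/

import Mathlib

open MeasureTheory

lemma chu_aux1 {X : Type*} [ms : MeasurableSpace X] {μ : Measure X} {s : Set X} {f : X → ℝ}
    (hs : MeasurableSet s) (hf : Integrable f μ) (h0 : ∀ x, 0 ≤ f x)
    (hint : ∫ x in s, f x ∂μ = 0) : ∀ᵐ x ∂μ, x ∈ s → f x = 0 := by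
  have hzero : f =ᵐ[μ.restrict s] 0 := by
    refine (setIntegral_eq_zero_iff_of_nonneg_ae ?_ hf.integrableOn).mp hint
    exact Filter.Eventually.of_forall h0
  have := (ae_restrict_iff' hs).mp hzero
  filter_upwards [this] with x hx hx0
  exact hx hx0

lemma chu_aux_zero {X : Type*} [m0 : MeasurableSpace X] (μ : Measure X)
    [IsProbabilityMeasure μ] (m : MeasurableSpace X) (hm : m ≤ m0)
    (f : X → ℝ) (hf : Integrable f μ) (h0 : ∀ x, 0 ≤ f x) :
    ∀ᵐ x ∂μ, (μ[f|m]) x = 0 → f x = 0 := by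
  set h := μ[f|m] with hh
  have hsm : MeasurableSet[m] (h ⁻¹' {0}) :=
    (stronglyMeasurable_condExp (f := f)).measurable (measurableSet_singleton 0)
  have hs0 : MeasurableSet[m0] (h ⁻¹' {0}) := hm _ hsm
  have hint : ∫ x in h ⁻¹' {0}, f x ∂μ = 0 := by
    rw [← setIntegral_condExp hm hf hsm, ← hh]
    have hae : h =ᵐ[μ.restrict (h ⁻¹' {0})] 0 :=
      (ae_restrict_iff' hs0).mpr (Filter.Eventually.of_forall (fun x hx => hx))
    exact integral_eq_zero_of_ae hae
  exact chu_aux1 (ms := m0) hs0 hf h0 hint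

lemma chu_key {X : Type*} [m0 : MeasurableSpace X] (μ : Measure X)
    [IsProbabilityMeasure μ] (m : MeasurableSpace X) (hm : m ≤ m0)
    (f : X → ℝ) (hf : Integrable f μ) (h0 : ∀ x, 0 ≤ f x) :
    ∫⁻ x, ENNReal.ofReal (f x) / ENNReal.ofReal ((μ[f|m]) x) ∂μ ≤ 1 := by
  set h := μ[f|m] with hh
  have hsm' : StronglyMeasurable[m] h := stronglyMeasurable_condExp
  have hmeas : Measurable[m] h := hsm'.measurable
  have hmeas0 : Measurable[m0] h := hmeas.mono hm le_rfl
  have hpos_m : MeasurableSet[m] {x | 0 < h x} := hmeas measurableSet_Ioi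
  have hpos_0 : MeasurableSet[m0] {x | 0 < h x} := hm _ hpos_m
  -- truncated quotients
  set q : ℕ → X → ℝ := fun N x => if 0 < h x then min (f x / h x) N else 0 with hq
  have hq_eq_ind : ∀ N, q N = Set.indicator {x | 0 < h x} (fun x => min (f x / h x) N) := by
    intro N; funext x
    by_cases hx : 0 < h x <;> simp [hq, Set.indicator, hx]
  have hq_nonneg : ∀ N x, 0 ≤ q N x := by
    intro N x
    by_cases hx : 0 < h x
    · simp only [hq, hx, if_true]
      exact le_min (div_nonneg (h0 x) hx.le) (Nat.cast_nonneg N)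
    · simp [hq, hx]
  have hq_bdd : ∀ N x, q N x ≤ N := by
    intro N x
    by_cases hx : 0 < h x <;> simp [hq, hx]
  have hq_aesm : ∀ N, AEStronglyMeasurable[m0] (q N) μ := by
    intro N
    rw [hq_eq_ind]
    exact AEStronglyMeasurable.indicator
      (((hf.1.aemeasurable.div hmeas0.aemeasurable).min aemeasurable_const).aestronglyMeasurable)
      hpos_0
  have hq_int : ∀ N, Integrable (q N) μ := by
    intro N
    refine Integrable.mono' (integrable_const (N : ℝ)) (hq_aesm N) ?_
    filter_upwards with x
    rw [Real.norm_eq_abs, abs_of_nonneg (hq_nonneg N x)]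
    exact hq_bdd N x
  have hqh_le : ∀ N x, h x * q N x ≤ f x := by
    intro N x
    by_cases hx : 0 < h x
    · simp only [hq, hx, if_true]
      calc h x * min (f x / h x) (N : ℝ) ≤ h x * (f x / h x) :=
            mul_le_mul_of_nonneg_left (min_le_left _ _) hx.le
        _ = f x := by field_simp
    · simp [hq, hx, h0 x]
  have hqh_nonneg : ∀ N x, 0 ≤ h x * q N x := by
    intro N x
    by_cases hx : 0 < h x
    · exact mul_nonneg hx.le (hq_nonneg N x)
    · simp [hq, hx]
  have hqh_int : ∀ N, Integrable (fun x => h x * q N x) μ := by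
    intro N
    refine Integrable.mono' hf
      (((stronglyMeasurable_condExp.mono hm).aestronglyMeasurable).mul (hq_aesm N)) ?_
    filter_upwards with x
    rw [Real.norm_eq_abs, abs_of_nonneg (hqh_nonneg N x)]
    exact hqh_le N x
  -- conditional expectation bound: μ[q N | m] ≤ 1 a.e.
  have hcond_le_one : ∀ N, (μ[q N|m]) ≤ᵐ[μ] fun _ => (1 : ℝ) := by
    intro N
    have hqh_int' : Integrable (h * q N) μ := hqh_int N
    have hpull : μ[h * q N|m] =ᵐ[μ] h * μ[q N|m] :=
      condExp_mul_of_stronglyMeasurable_left hsm' hqh_int' (hq_int N)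
    have hmono : μ[h * q N|m] ≤ᵐ[μ] μ[f|m] :=
      condExp_mono hqh_int' hf (Filter.Eventually.of_forall (fun x => hqh_le N x))
    have hind_self : Set.indicator {x | 0 < h x} (q N) = q N := by
      funext x
      by_cases hx : 0 < h x <;> simp [Set.indicator, hq, hx]
    have hind : μ[q N|m] =ᵐ[μ] Set.indicator {x | 0 < h x} (μ[q N|m]) := by
      have := condExp_indicator (μ := μ) (m := m) (hq_int N) hpos_m
      rwa [hind_self] at this
    have hnn := condExp_nonneg (μ := μ) (m := m)
      (Filter.Eventually.of_forall (hq_nonneg N) : 0 ≤ᵐ[μ] q N)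
    filter_upwards [hpull, hmono, hind, hnn] with x hx1 hx2 hx3 hx4
    by_cases hx : 0 < h x
    · have : h x * (μ[q N|m]) x ≤ h x := by
        rw [← Pi.mul_apply h (μ[q N|m]), ← hx1]; exact hx2
      have := le_of_mul_le_mul_left (by linarith [this] : h x * (μ[q N|m]) x ≤ h x * 1) hx
      exact this
    · have hz : ({x | 0 < h x}).indicator (μ[q N|m]) x = 0 :=
        Set.indicator_of_notMem (by exact hx) _
      rw [hx3, hz]
      exact zero_le_one
  -- integral of q N is at most 1
  have hint_le : ∀ N, ∫ x, q N x ∂μ ≤ 1 := by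
    intro N
    rw [← integral_condExp hm (f := q N)]
    calc ∫ x, (μ[q N|m]) x ∂μ ≤ ∫ _x, (1 : ℝ) ∂μ :=
          integral_mono_ae integrable_condExp (integrable_const 1) (hcond_le_one N)
      _ = 1 := by simp
  have hlint_le : ∀ N, ∫⁻ x, ENNReal.ofReal (q N x) ∂μ ≤ 1 := by
    intro N
    have heq := ofReal_integral_eq_lintegral_ofReal (hq_int N)
      (Filter.Eventually.of_forall (hq_nonneg N))
    rw [← heq]
    exact ENNReal.ofReal_le_one.mpr (hint_le N)
  -- a.e. identity: sup over N of ofReal (q N) equals ofReal f / ofReal h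
  have hnn_h : 0 ≤ᵐ[μ] h := condExp_nonneg (Filter.Eventually.of_forall h0)
  have hzero := chu_aux_zero (m0 := m0) μ m hm f hf h0
  have hae_eq : ∀ᵐ x ∂μ,
      ENNReal.ofReal (f x) / ENNReal.ofReal (h x) = ⨆ N, ENNReal.ofReal (q N x) := by
    filter_upwards [hnn_h, hzero] with x hx1 hx2
    by_cases hx : 0 < h x
    · have hdiv : ENNReal.ofReal (f x) / ENNReal.ofReal (h x)
          = ENNReal.ofReal (f x / h x) := (ENNReal.ofReal_div_of_pos hx).symm
      rw [hdiv]
      apply le_antisymm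
      · obtain ⟨N, hN⟩ := exists_nat_ge (f x / h x)
        refine le_trans (le_of_eq ?_) (le_iSup _ N)
        simp [hq, hx, min_eq_left hN]
      · refine iSup_le fun N => ?_
        simp only [hq, hx, if_true]
        exact ENNReal.ofReal_le_ofReal (min_le_left _ _)
    · have hx0 : h x = 0 := le_antisymm (not_lt.mp hx) hx1
      have hf0 : f x = 0 := hx2 hx0
      simp [hq, hx, hx0, hf0]
  rw [lintegral_congr_ae hae_eq]
  have hmono' : ∀ᵐ x ∂μ, Monotone fun N : ℕ => ENNReal.ofReal (q N x) := by
    filter_upwards with x N M hNM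
    apply ENNReal.ofReal_le_ofReal
    by_cases hx : 0 < h x
    · simp only [hq, hx, if_true]
      exact min_le_min le_rfl (Nat.cast_le.mpr hNM)
    · simp [hq, hx]
  have haem : ∀ N : ℕ, AEMeasurable (fun x => ENNReal.ofReal (q N x)) μ := fun N =>
    ENNReal.measurable_ofReal.comp_aemeasurable (hq_aesm N).aemeasurable
  rw [lintegral_iSup' haem hmono']
  exact iSup_le hlint_le

theorem stmt_1 {X : Type*} [m0 : MeasurableSpace X] (μ : Measure X) [IsProbabilityMeasure μ]
    (n : ℕ) (B : Fin n → MeasurableSpace X) (hB : ∀ i, B i ≤ m0)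
    (f : Fin (n + 1) → X → ℝ) (hint : ∀ i, Integrable (f i) μ)
    (hnonneg : ∀ i x, 0 ≤ f i x) :
    (∫⁻ x, ENNReal.ofReal (∏ i : Fin (n + 1), f i x ^ ((n + 1 : ℝ))⁻¹) ∂μ) ^ (n + 1)
      ≤ ∫⁻ x, ENNReal.ofReal (f 0 x * ∏ i : Fin n, (μ[f i.succ | B i]) x) ∂μ := by
  set r : ℝ := ((n + 1 : ℝ))⁻¹ with hrdef
  have hr : 0 ≤ r := by positivity
  set H : Fin n → X → ℝ := fun i => μ[f i.succ | B i] with hH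
  have hHsm : ∀ i, StronglyMeasurable[m0] (H i) :=
    fun i => stronglyMeasurable_condExp.mono (hB i)
  set G : Fin (n + 1) → X → ENNReal :=
    Fin.cons (fun x => ENNReal.ofReal (f 0 x) * ∏ i, ENNReal.ofReal (H i x))
      (fun i x => ENNReal.ofReal (f i.succ x) / ENNReal.ofReal (H i x)) with hG
  have hGmeas : ∀ i ∈ Finset.univ, AEMeasurable (G i) μ := by
    intro i _
    induction i using Fin.cases with
    | zero =>
      rw [hG, Fin.cons_zero]
      exact (ENNReal.measurable_ofReal.comp_aemeasurable (hint 0).1.aemeasurable).mul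
        (Finset.measurable_prod Finset.univ fun i _ =>
          ENNReal.measurable_ofReal.comp (hHsm i).measurable).aemeasurable
    | succ i =>
      rw [hG, Fin.cons_succ]
      exact (ENNReal.measurable_ofReal.comp_aemeasurable (hint i.succ).1.aemeasurable).div
        (ENNReal.measurable_ofReal.comp (hHsm i).measurable).aemeasurable
  have hp : ∑ _i : Fin (n + 1), r = 1 := by
    rw [Finset.sum_const, Finset.card_univ, Fintype.card_fin, nsmul_eq_mul, hrdef]
    push_cast
    rw [mul_inv_cancel₀ (by positivity)]
  have holder := ENNReal.lintegral_prod_norm_pow_le (μ := μ) Finset.univ hGmeas hp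
    (fun i _ => hr)
  -- a.e. facts about H
  have haeH : ∀ᵐ x ∂μ, ∀ i, 0 ≤ H i x ∧ (H i x = 0 → f i.succ x = 0) := by
    rw [ae_all_iff]
    intro i
    have h1 : 0 ≤ᵐ[μ] H i :=
      condExp_nonneg (Filter.Eventually.of_forall (hnonneg i.succ))
    have h2 := chu_aux_zero (m0 := m0) μ (B i) (hB i) (f i.succ) (hint i.succ)
      (hnonneg i.succ)
    filter_upwards [h1, h2] with x hx1 hx2
    exact ⟨hx1, hx2⟩
  -- pointwise a.e. bound for LHS integrand
  have hpt : ∀ᵐ x ∂μ, ENNReal.ofReal (∏ i : Fin (n + 1), f i x ^ r)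
      ≤ ∏ i : Fin (n + 1), G i x ^ r := by
    filter_upwards [haeH] with x hx
    have e1 : ENNReal.ofReal (∏ i : Fin (n + 1), f i x ^ r)
        = ∏ i : Fin (n + 1), ENNReal.ofReal (f i x) ^ r := by
      rw [ENNReal.ofReal_prod_of_nonneg (fun i _ => Real.rpow_nonneg (hnonneg i x) r)]
      exact Finset.prod_congr rfl fun i _ =>
        (ENNReal.ofReal_rpow_of_nonneg (hnonneg i x) hr).symm
    rw [e1, ENNReal.prod_rpow_of_nonneg hr, ENNReal.prod_rpow_of_nonneg hr]
    refine ENNReal.rpow_le_rpow ?_ hr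
    rw [Fin.prod_univ_succ, Fin.prod_univ_succ]
    simp only [hG, Fin.cons_zero, Fin.cons_succ]
    rw [mul_assoc, ← Finset.prod_mul_distrib]
    refine mul_le_mul_right (Finset.prod_le_prod' fun i _ => ?_) _
    rcases eq_or_lt_of_le (hx i).1 with hzero | hpos
    · rw [(hx i).2 hzero.symm]
      simp
    · rw [ENNReal.mul_div_cancel (ENNReal.ofReal_pos.mpr hpos).ne' ENNReal.ofReal_ne_top]
  -- each non-leading factor of the Hölder bound is at most one
  have hfac : ∀ i : Fin n, ∫⁻ x, G i.succ x ∂μ ≤ 1 := by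
    intro i
    simp only [hG, Fin.cons_succ]
    exact chu_key (m0 := m0) μ (B i) (hB i) (f i.succ) (hint i.succ) (hnonneg i.succ)
  have hmain : ∫⁻ x, ENNReal.ofReal (∏ i : Fin (n + 1), f i x ^ r) ∂μ
      ≤ (∫⁻ x, G 0 x ∂μ) ^ r := by
    refine le_trans (lintegral_mono_ae hpt) (le_trans holder ?_)
    rw [Fin.prod_univ_succ]
    calc (∫⁻ x, G 0 x ∂μ) ^ r * ∏ i : Fin n, (∫⁻ x, G i.succ x ∂μ) ^ r
        ≤ (∫⁻ x, G 0 x ∂μ) ^ r * 1 := by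
          exact mul_le_mul_right (Finset.prod_le_one (fun i _ => zero_le)
            (fun i _ => ENNReal.rpow_le_one (hfac i) hr)) _
      _ = (∫⁻ x, G 0 x ∂μ) ^ r := mul_one _
  have hG0 : ∫⁻ x, G 0 x ∂μ
      = ∫⁻ x, ENNReal.ofReal (f 0 x * ∏ i : Fin n, H i x) ∂μ := by
    refine lintegral_congr_ae ?_
    filter_upwards [haeH] with x hx
    rw [hG, Fin.cons_zero]
    rw [ENNReal.ofReal_mul (hnonneg 0 x),
      ENNReal.ofReal_prod_of_nonneg (fun i _ => (hx i).1)]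
  calc (∫⁻ x, ENNReal.ofReal (∏ i : Fin (n + 1), f i x ^ r) ∂μ) ^ (n + 1)
      ≤ ((∫⁻ x, G 0 x ∂μ) ^ r) ^ (n + 1) := pow_le_pow_left' hmain (n + 1)
    _ = ∫⁻ x, G 0 x ∂μ := by
        rw [← ENNReal.rpow_natCast ((∫⁻ x, G 0 x ∂μ) ^ r) (n + 1), ← ENNReal.rpow_mul,
          hrdef]
        push_cast
        rw [inv_mul_cancel₀ (by positivity), ENNReal.rpow_one]
    _ = _ := hG0
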